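/- In E[[z]], the ratio ₁φ₁(0;cq;q,qz) / ₁φ₁(0;c;q,z) admits the following two continued fraction expansions: (i) it equals 1/(1 − b_0 z − a_1 z/(1 − b_1 z − a_2 z/(1 − b_2 z − ⋯))) with a_i := cq^{2i−1}/((1 − cq^{i−1})(1 − cq^i)) and b_i := q^i/(1 − cq^i); and (ii) it equals 1/(1 − λ_1 z/(1 − λ_2 z/(1 − λ_3 z/(1 − ⋯)))) with λ_{2i} := cq^{3i−1}/((1 − cq^{2i−1})(1 − cq^{2i})) and λ_{2i+1} := q^i/((1 − cq^{2i})(1 − cq^{2i+1})). -/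

import Mathlib

noncomputable section

/-- `E`, the fraction field of `ℚ[q,c]`. -/
abbrev E : Type := FractionRing (MvPolynomial (Fin 2) ℚ)

def qv : E := algebraMap (MvPolynomial (Fin 2) ℚ) E (MvPolynomial.X 0)
def cv : E := algebraMap (MvPolynomial (Fin 2) ℚ) E (MvPolynomial.X 1)

/-- The q-Pochhammer symbol `(u;q)_n`. -/
def qPoch (u : E) (n : ℕ) : E := ∏ j ∈ Finset.range n, (1 - u * qv ^ j)

/-- `₁φ₁(0; C; q, α z)` as an element of `E[[z]]`: its `n`-th coefficient is
`(−1)^n q^{n(n−1)/2} α^n / ((q;q)_n (C;q)_n)`. -/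
def phiSeries (C α : E) : PowerSeries E :=
  PowerSeries.mk fun n =>
    (-1) ^ n * qv ^ (n * (n - 1) / 2) * α ^ n / (qPoch qv n * qPoch C n)

/-- `b_i = q^i/(1 − cq^i)`. -/
def bE (i : ℕ) : E := qv ^ i / (1 - cv * qv ^ i)

/-- `a_i = cq^{2i−1}/((1 − cq^{i−1})(1 − cq^i))`. -/
def aE (i : ℕ) : E :=
  cv * qv ^ (2 * (i : ℤ) - 1) / ((1 - cv * qv ^ ((i : ℤ) - 1)) * (1 - cv * qv ^ i))

/-- `λ_{2i} = cq^{3i−1}/((1 − cq^{2i−1})(1 − cq^{2i}))` and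
`λ_{2i+1} = q^i/((1 − cq^{2i})(1 − cq^{2i+1}))`. -/
def lamE (n : ℕ) : E :=
  (if n % 2 = 0 then cv * qv ^ (3 * ((n : ℤ) / 2) - 1) else (qv : E) ^ (n / 2)) /
    ((1 - cv * qv ^ ((n : ℤ) - 1)) * (1 - cv * qv ^ n))

/-- The depth-`N` convergent of the `J`-type continued fraction
`1/(1 − b_0 z − a_1 z/(1 − b_1 z − ⋯ − a_N z/(1 − b_N z)))`: `convJ b a N k` is the tail
starting with `b_{N-k}`, so the convergent is `convJ b a N N`. -/
def convJ (b a : ℕ → E) (N : ℕ) : ℕ → PowerSeries E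
  | 0 => (1 - PowerSeries.C (b N) * PowerSeries.X)⁻¹
  | k + 1 =>
      (1 - PowerSeries.C (b (N - k - 1)) * PowerSeries.X -
          PowerSeries.C (a (N - k)) * PowerSeries.X * convJ b a N k)⁻¹

/-- The depth-`N` convergent of the Stieltjes-type continued fraction
`1/(1 − λ_1 z/(1 − λ_2 z/(⋯ − λ_N z/1)))`. -/
def convS (lam : ℕ → E) (N : ℕ) : ℕ → PowerSeries E
  | 0 => 1
  | k + 1 => (1 - PowerSeries.C (lam (N - k)) * PowerSeries.X * convS lam N k)⁻¹

/- ===== auxiliary development ===== -/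

lemma qv_ne : qv ≠ 0 := by
  simp only [qv, ne_eq, map_eq_zero_iff _ (IsFractionRing.injective (MvPolynomial (Fin 2) ℚ) E)]
  exact MvPolynomial.X_ne_zero 0

lemma one_sub_cq_ne (j : ℕ) : (1 : E) - cv * qv ^ j ≠ 0 := by
  have h : (1 : E) - cv * qv ^ j =
      algebraMap (MvPolynomial (Fin 2) ℚ) E (1 - MvPolynomial.X 1 * MvPolynomial.X 0 ^ j) := by
    simp [cv, qv, map_sub, map_mul, map_pow]
  rw [h, ne_eq, map_eq_zero_iff _ (IsFractionRing.injective (MvPolynomial (Fin 2) ℚ) E)]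
  intro hc
  have := congrArg (MvPolynomial.eval fun _ => (0:ℚ)) hc
  simp at this

lemma one_sub_q_ne (j : ℕ) : (1 : E) - qv * qv ^ j ≠ 0 := by
  have h : (1 : E) - qv * qv ^ j =
      algebraMap (MvPolynomial (Fin 2) ℚ) E (1 - MvPolynomial.X 0 * MvPolynomial.X 0 ^ j) := by
    simp [qv, map_sub, map_mul, map_pow]
  rw [h, ne_eq, map_eq_zero_iff _ (IsFractionRing.injective (MvPolynomial (Fin 2) ℚ) E)]
  intro hc
  have := congrArg (MvPolynomial.eval fun _ => (0:ℚ)) hc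
  simp at this

lemma qPoch_q_ne (n : ℕ) : qPoch qv n ≠ 0 :=
  Finset.prod_ne_zero_iff.2 fun j _ => one_sub_q_ne j

lemma one_sub_cqq_ne (k j : ℕ) : (1 : E) - cv * qv ^ k * qv ^ j ≠ 0 := by
  have := one_sub_cq_ne (k + j); rwa [pow_add, ← mul_assoc] at this

lemma qPoch_cq_ne (k n : ℕ) : qPoch (cv * qv ^ k) n ≠ 0 :=
  Finset.prod_ne_zero_iff.2 fun j _ => one_sub_cqq_ne k j

lemma qPoch_succ (u : E) (n : ℕ) : qPoch u (n+1) = qPoch u n * (1 - u * qv ^ n) :=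
  Finset.prod_range_succ _ _

lemma qPoch_succ' (u : E) (n : ℕ) : qPoch u (n+1) = (1 - u) * qPoch (u * qv) n := by
  rw [qPoch, Finset.prod_range_succ']
  simp only [pow_zero, mul_one, qPoch]
  rw [mul_comm]
  congr 1
  refine Finset.prod_congr rfl fun j _ => ?_
  ring

lemma tri_succ (m : ℕ) : (m+1) * m / 2 = m * (m-1) / 2 + m := by
  have h : (m+1) * m = m * (m-1) + m * 2 := by
    cases m with
    | zero => rfl
    | succ n => simp [Nat.succ_sub_one]; ring
  rw [h, Nat.add_mul_div_right _ _ (by norm_num : 0 < 2)]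

/-- coefficient of `G_k = φ(c q^k; q^k z)`. -/
def gc (k n : ℕ) : E :=
  (-1) ^ n * qv ^ (n * (n - 1) / 2) * (qv ^ k) ^ n / (qPoch qv n * qPoch (cv * qv ^ k) n)

/-- coefficient of `H_j`. -/
def hc (j n : ℕ) : E :=
  (-1) ^ n * qv ^ (n * (n - 1) / 2) * (qv ^ ((j+1)/2)) ^ n
    / (qPoch qv n * qPoch (cv * qv ^ j) n)

lemma aE_succ (k : ℕ) : aE (k+1) =
    cv * qv ^ (2*k+1) / ((1 - cv * qv ^ k) * (1 - cv * qv ^ (k+1))) := by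
  have h1 : (2 * ((k+1 : ℕ) : ℤ) - 1) = ((2*k+1 : ℕ) : ℤ) := by push_cast; ring
  have h2 : (((k+1 : ℕ) : ℤ) - 1) = ((k : ℕ) : ℤ) := by push_cast; ring
  rw [aE, h1, h2, zpow_natCast, zpow_natCast]

lemma cqk_mul (k : ℕ) : cv * qv ^ k * qv = cv * qv ^ (k+1) := by ring

set_option maxHeartbeats 1000000 in
lemma gc_rec (k m : ℕ) :
    gc k (m+1) = gc (k+1) (m+1) - bE k * gc (k+1) m - aE (k+1) * gc (k+2) m := by
  have e1 : qPoch qv (m+1) = qPoch qv m * (1 - qv * qv ^ m) := qPoch_succ _ _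
  have e2 : qPoch (cv * qv ^ k) (m+1) = (1 - cv * qv ^ k) * qPoch (cv * qv ^ (k+1)) m := by
    rw [qPoch_succ', cqk_mul]
  have e3 : qPoch (cv * qv ^ (k+1)) (m+1)
      = (1 - cv * qv ^ (k+1)) * qPoch (cv * qv ^ (k+2)) m := by
    rw [qPoch_succ', cqk_mul]
  have hswap : (1 - cv * qv ^ (k+1)) * qPoch (cv * qv ^ (k+2)) m
      = qPoch (cv * qv ^ (k+1)) m * (1 - cv * qv ^ (k+1) * qv ^ m) :=
    e3.symm.trans (qPoch_succ _ m)
  have h1 : (1 : E) - qv * qv ^ m ≠ 0 := one_sub_q_ne m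
  have h2 : (1 : E) - cv * qv ^ k ≠ 0 := one_sub_cq_ne k
  have h4 : (1 : E) - cv * qv ^ (k+1) * qv ^ m ≠ 0 := one_sub_cqq_ne (k+1) m
  have hPne : qPoch qv m ≠ 0 := qPoch_q_ne m
  have hBne : qPoch (cv * qv ^ (k+1)) m ≠ 0 := qPoch_cq_ne (k+1) m
  simp only [gc, bE, aE_succ, Nat.add_sub_cancel]
  rw [tri_succ, e1, e2, e3, div_mul_div_comm, div_mul_div_comm,
    show (1 - cv * qv ^ k) * (1 - cv * qv ^ (k+1)) *
        (qPoch qv m * qPoch (cv * qv ^ (k+2)) m)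
      = (1 - cv * qv ^ k) * qPoch qv m *
          ((1 - cv * qv ^ (k+1)) * qPoch (cv * qv ^ (k+2)) m) from by ring,
    hswap, div_sub_div _ _
      (mul_ne_zero (mul_ne_zero hPne h1) (mul_ne_zero hBne h4))
      (mul_ne_zero h2 (mul_ne_zero hPne hBne)),
    div_sub_div _ _
      (mul_ne_zero (mul_ne_zero (mul_ne_zero hPne h1) (mul_ne_zero hBne h4))
        (mul_ne_zero h2 (mul_ne_zero hPne hBne)))
      (mul_ne_zero (mul_ne_zero h2 hPne) (mul_ne_zero hBne h4)),
    div_eq_div_iff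
      (mul_ne_zero (mul_ne_zero hPne h1) (mul_ne_zero h2 hBne))
      (mul_ne_zero
        (mul_ne_zero (mul_ne_zero (mul_ne_zero hPne h1) (mul_ne_zero hBne h4))
          (mul_ne_zero h2 (mul_ne_zero hPne hBne)))
        (mul_ne_zero (mul_ne_zero h2 hPne) (mul_ne_zero hBne h4)))]
  ring

lemma lamE_odd (k : ℕ) :
    lamE (2*k+1) = qv ^ k / ((1 - cv * qv ^ (2*k)) * (1 - cv * qv ^ (2*k+1))) := by
  rw [lamE, if_neg (by omega),
    show ((2*k+1 : ℕ) : ℤ) - 1 = ((2*k : ℕ) : ℤ) by push_cast; ring, zpow_natCast,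
    show (2*k+1)/2 = k by omega]

lemma lamE_even (k : ℕ) :
    lamE (2*k+2) = cv * qv ^ (3*k+2) / ((1 - cv * qv ^ (2*k+1)) * (1 - cv * qv ^ (2*k+2))) := by
  rw [lamE, if_pos (by omega),
    show 3 * (((2*k+2 : ℕ) : ℤ) / 2) - 1 = ((3*k+2 : ℕ) : ℤ) by push_cast; omega,
    show ((2*k+2 : ℕ) : ℤ) - 1 = ((2*k+1 : ℕ) : ℤ) by push_cast; ring,
    zpow_natCast, zpow_natCast]

set_option maxHeartbeats 1000000 in
lemma hc_rec_even (k m : ℕ) :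
    hc (2*k) (m+1) = hc (2*k+1) (m+1) - lamE (2*k+1) * hc (2*k+2) m := by
  have e1 : qPoch qv (m+1) = qPoch qv m * (1 - qv * qv ^ m) := qPoch_succ _ _
  have e2 : qPoch (cv * qv ^ (2*k)) (m+1)
      = (1 - cv * qv ^ (2*k)) * qPoch (cv * qv ^ (2*k+1)) m := by
    rw [qPoch_succ', cqk_mul]
  have e3 : qPoch (cv * qv ^ (2*k+1)) (m+1)
      = (1 - cv * qv ^ (2*k+1)) * qPoch (cv * qv ^ (2*k+1+1)) m := by
    rw [qPoch_succ', cqk_mul]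
  have hswap : (1 - cv * qv ^ (2*k+1)) * qPoch (cv * qv ^ (2*k+1+1)) m
      = qPoch (cv * qv ^ (2*k+1)) m * (1 - cv * qv ^ (2*k+1) * qv ^ m) :=
    e3.symm.trans (qPoch_succ _ m)
  have h1 : (1 : E) - qv * qv ^ m ≠ 0 := one_sub_q_ne m
  have h2 : (1 : E) - cv * qv ^ (2*k) ≠ 0 := one_sub_cq_ne (2*k)
  have h4 : (1 : E) - cv * qv ^ (2*k+1) * qv ^ m ≠ 0 := one_sub_cqq_ne (2*k+1) m
  have hPne : qPoch qv m ≠ 0 := qPoch_q_ne m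
  have hBne : qPoch (cv * qv ^ (2*k+1)) m ≠ 0 := qPoch_cq_ne (2*k+1) m
  simp only [hc, lamE_odd, Nat.add_sub_cancel,
    show (2*k+1)/2 = k by omega, show (2*k+1+1)/2 = k+1 by omega,
    show (2*k+2+1)/2 = k+1 by omega]
  rw [tri_succ, e1, e2, show 2*k+2 = 2*k+1+1 by omega, e3, div_mul_div_comm,
    show (1 - cv * qv ^ (2*k)) * (1 - cv * qv ^ (2*k+1)) *
        (qPoch qv m * qPoch (cv * qv ^ (2*k+1+1)) m)
      = (1 - cv * qv ^ (2*k)) * qPoch qv m *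
          ((1 - cv * qv ^ (2*k+1)) * qPoch (cv * qv ^ (2*k+1+1)) m) from by ring,
    hswap,
    div_sub_div _ _
      (mul_ne_zero (mul_ne_zero hPne h1) (mul_ne_zero hBne h4))
      (mul_ne_zero (mul_ne_zero h2 hPne) (mul_ne_zero hBne h4)),
    div_eq_div_iff
      (mul_ne_zero (mul_ne_zero hPne h1) (mul_ne_zero h2 hBne))
      (mul_ne_zero
        (mul_ne_zero (mul_ne_zero hPne h1) (mul_ne_zero hBne h4))
        (mul_ne_zero (mul_ne_zero h2 hPne) (mul_ne_zero hBne h4)))]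
  ring

set_option maxHeartbeats 1000000 in
lemma hc_rec_odd (k m : ℕ) :
    hc (2*k+1) (m+1) = hc (2*k+2) (m+1) - lamE (2*k+2) * hc (2*k+3) m := by
  have e1 : qPoch qv (m+1) = qPoch qv m * (1 - qv * qv ^ m) := qPoch_succ _ _
  have e2 : qPoch (cv * qv ^ (2*k+1)) (m+1)
      = (1 - cv * qv ^ (2*k+1)) * qPoch (cv * qv ^ (2*k+1+1)) m := by
    rw [qPoch_succ', cqk_mul]
  have e3 : qPoch (cv * qv ^ (2*k+1+1)) (m+1)
      = (1 - cv * qv ^ (2*k+1+1)) * qPoch (cv * qv ^ (2*k+1+1+1)) m := by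
    rw [qPoch_succ', cqk_mul]
  have hswap : (1 - cv * qv ^ (2*k+1+1)) * qPoch (cv * qv ^ (2*k+1+1+1)) m
      = qPoch (cv * qv ^ (2*k+1+1)) m * (1 - cv * qv ^ (2*k+1+1) * qv ^ m) :=
    e3.symm.trans (qPoch_succ _ m)
  have h1 : (1 : E) - qv * qv ^ m ≠ 0 := one_sub_q_ne m
  have h2 : (1 : E) - cv * qv ^ (2*k+1) ≠ 0 := one_sub_cq_ne (2*k+1)
  have h4 : (1 : E) - cv * qv ^ (2*k+1+1) * qv ^ m ≠ 0 := one_sub_cqq_ne (2*k+1+1) m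
  have hPne : qPoch qv m ≠ 0 := qPoch_q_ne m
  have hBne : qPoch (cv * qv ^ (2*k+1+1)) m ≠ 0 := qPoch_cq_ne (2*k+1+1) m
  simp only [hc, lamE_even, Nat.add_sub_cancel,
    show (2*k+1+1)/2 = k+1 by omega, show (2*k+2+1)/2 = k+1 by omega,
    show (2*k+3+1)/2 = k+2 by omega]
  rw [tri_succ, e1, e2, show 2*k+2 = 2*k+1+1 by omega, show 2*k+3 = 2*k+1+1+1 by omega,
    e3, div_mul_div_comm,
    show (1 - cv * qv ^ (2*k+1)) * (1 - cv * qv ^ (2*k+1+1)) *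
        (qPoch qv m * qPoch (cv * qv ^ (2*k+1+1+1)) m)
      = (1 - cv * qv ^ (2*k+1)) * qPoch qv m *
          ((1 - cv * qv ^ (2*k+1+1)) * qPoch (cv * qv ^ (2*k+1+1+1)) m) from by ring,
    hswap,
    div_sub_div _ _
      (mul_ne_zero (mul_ne_zero hPne h1) (mul_ne_zero hBne h4))
      (mul_ne_zero (mul_ne_zero h2 hPne) (mul_ne_zero hBne h4)),
    div_eq_div_iff
      (mul_ne_zero (mul_ne_zero hPne h1) (mul_ne_zero h2 hBne))
      (mul_ne_zero
        (mul_ne_zero (mul_ne_zero hPne h1) (mul_ne_zero hBne h4))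
        (mul_ne_zero (mul_ne_zero h2 hPne) (mul_ne_zero hBne h4)))]
  ring

lemma hc_rec (j m : ℕ) :
    hc j (m+1) = hc (j+1) (m+1) - lamE (j+1) * hc (j+2) m := by
  rcases Nat.even_or_odd j with ⟨k, hk⟩ | ⟨k, hk⟩
  · obtain rfl : j = 2*k := by omega
    exact hc_rec_even k m
  · obtain rfl : j = 2*k+1 := by omega
    exact hc_rec_odd k m

/- ===== power series layer ===== -/

def Gs (k : ℕ) : PowerSeries E := phiSeries (cv * qv ^ k) (qv ^ k)
def Hs (j : ℕ) : PowerSeries E := phiSeries (cv * qv ^ j) (qv ^ ((j+1)/2))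

lemma coeff_Gs (k n : ℕ) : PowerSeries.coeff n (Gs k) = gc k n := by
  rw [Gs, phiSeries, PowerSeries.coeff_mk]; rfl

lemma coeff_Hs (j n : ℕ) : PowerSeries.coeff n (Hs j) = hc j n := by
  rw [Hs, phiSeries, PowerSeries.coeff_mk]; rfl

lemma gc_zero (k : ℕ) : gc k 0 = 1 := by simp [gc, qPoch]
lemma hc_zero (j : ℕ) : hc j 0 = 1 := by simp [hc, qPoch]

lemma GS_rec (k : ℕ) :
    Gs k = Gs (k+1) - PowerSeries.C (bE k) * PowerSeries.X * Gs (k+1)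
      - PowerSeries.C (aE (k+1)) * PowerSeries.X * Gs (k+2) := by
  ext n
  rw [map_sub, map_sub, mul_assoc, mul_assoc, PowerSeries.coeff_C_mul,
    PowerSeries.coeff_C_mul]
  cases n with
  | zero => simp [PowerSeries.coeff_zero_X_mul, coeff_Gs, gc_zero]
  | succ m =>
      rw [PowerSeries.coeff_succ_X_mul, PowerSeries.coeff_succ_X_mul,
        coeff_Gs, coeff_Gs, coeff_Gs, coeff_Gs]
      exact gc_rec k m

lemma HS_rec (j : ℕ) :
    Hs j = Hs (j+1) - PowerSeries.C (lamE (j+1)) * PowerSeries.X * Hs (j+2) := by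
  ext n
  rw [map_sub, mul_assoc, PowerSeries.coeff_C_mul]
  cases n with
  | zero => simp [PowerSeries.coeff_zero_X_mul, coeff_Hs, hc_zero]
  | succ m =>
      rw [PowerSeries.coeff_succ_X_mul, coeff_Hs, coeff_Hs, coeff_Hs]
      exact hc_rec j m

lemma constCoeff_Gs_ne (k : ℕ) : PowerSeries.constantCoeff (Gs k) ≠ 0 := by
  rw [← PowerSeries.coeff_zero_eq_constantCoeff_apply, coeff_Gs, gc_zero]
  exact one_ne_zero

lemma constCoeff_Hs_ne (j : ℕ) : PowerSeries.constantCoeff (Hs j) ≠ 0 := by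
  rw [← PowerSeries.coeff_zero_eq_constantCoeff_apply, coeff_Hs, hc_zero]
  exact one_ne_zero

def Rr (k : ℕ) : PowerSeries E := Gs (k+1) * (Gs k)⁻¹
def Tr (j : ℕ) : PowerSeries E := Hs (j+1) * (Hs j)⁻¹

lemma inv_from_mul {v f g : PowerSeries E} (hv : PowerSeries.constantCoeff v ≠ 0)
    (hg : PowerSeries.constantCoeff g ≠ 0) (h : v * f = g) : f * g⁻¹ = v⁻¹ := by
  have h1 := PowerSeries.inv_mul_cancel v hv
  have h2 := PowerSeries.mul_inv_cancel g hg
  have h3 : v⁻¹ * (v * f) = f := by rw [← mul_assoc, h1, one_mul]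
  calc f * g⁻¹ = v⁻¹ * (v * f) * g⁻¹ := by rw [h3]
    _ = v⁻¹ * (g * g⁻¹) := by rw [h, mul_assoc]
    _ = v⁻¹ := by rw [h2, mul_one]

lemma constCoeff_Rr (k : ℕ) : PowerSeries.constantCoeff (Rr k) ≠ 0 := by
  rw [Rr, map_mul, PowerSeries.constantCoeff_inv]
  exact mul_ne_zero (constCoeff_Gs_ne (k+1)) (inv_ne_zero (constCoeff_Gs_ne k))

lemma constCoeff_Tr (j : ℕ) : PowerSeries.constantCoeff (Tr j) ≠ 0 := by
  rw [Tr, map_mul, PowerSeries.constantCoeff_inv]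
  exact mul_ne_zero (constCoeff_Hs_ne (j+1)) (inv_ne_zero (constCoeff_Hs_ne j))

lemma Rr_eq (k : ℕ) :
    Rr k = (1 - PowerSeries.C (bE k) * PowerSeries.X
      - PowerSeries.C (aE (k+1)) * PowerSeries.X * Rr (k+1))⁻¹ := by
  have hv : PowerSeries.constantCoeff
      (1 - PowerSeries.C (bE k) * PowerSeries.X
        - PowerSeries.C (aE (k+1)) * PowerSeries.X * Rr (k+1)) ≠ 0 := by
    simp
  have hmul : (1 - PowerSeries.C (bE k) * PowerSeries.X
      - PowerSeries.C (aE (k+1)) * PowerSeries.X * Rr (k+1)) * Gs (k+1) = Gs k := by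
    have expand : (1 - PowerSeries.C (bE k) * PowerSeries.X
        - PowerSeries.C (aE (k+1)) * PowerSeries.X * (Gs (k+2) * (Gs (k+1))⁻¹)) * Gs (k+1)
        = Gs (k+1) - PowerSeries.C (bE k) * PowerSeries.X * Gs (k+1)
          - PowerSeries.C (aE (k+1)) * PowerSeries.X *
              (Gs (k+2) * ((Gs (k+1))⁻¹ * Gs (k+1))) := by ring
    rw [Rr, expand, PowerSeries.inv_mul_cancel _ (constCoeff_Gs_ne (k+1)), mul_one,
      ← GS_rec]
  rw [Rr]
  exact inv_from_mul hv (constCoeff_Gs_ne k) hmul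

lemma Tr_eq (j : ℕ) :
    Tr j = (1 - PowerSeries.C (lamE (j+1)) * PowerSeries.X * Tr (j+1))⁻¹ := by
  have hv : PowerSeries.constantCoeff
      (1 - PowerSeries.C (lamE (j+1)) * PowerSeries.X * Tr (j+1)) ≠ 0 := by
    simp
  have hmul : (1 - PowerSeries.C (lamE (j+1)) * PowerSeries.X * Tr (j+1)) * Hs (j+1)
      = Hs j := by
    have expand : (1 - PowerSeries.C (lamE (j+1)) * PowerSeries.X *
        (Hs (j+2) * (Hs (j+1))⁻¹)) * Hs (j+1)
        = Hs (j+1) - PowerSeries.C (lamE (j+1)) * PowerSeries.X *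
            (Hs (j+2) * ((Hs (j+1))⁻¹ * Hs (j+1))) := by ring
    rw [Tr, expand, PowerSeries.inv_mul_cancel _ (constCoeff_Hs_ne (j+1)), mul_one,
      ← HS_rec]
  rw [Tr]
  exact inv_from_mul hv (constCoeff_Hs_ne j) hmul

lemma X_dvd_inv_sub {u v : PowerSeries E} (hu : PowerSeries.constantCoeff u ≠ 0)
    (hv : PowerSeries.constantCoeff v ≠ 0) {n : ℕ}
    (h : (PowerSeries.X : PowerSeries E) ^ n ∣ u - v) :
    (PowerSeries.X : PowerSeries E) ^ n ∣ u⁻¹ - v⁻¹ := by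
  have hu' := PowerSeries.mul_inv_cancel u hu
  have hv' := PowerSeries.mul_inv_cancel v hv
  have key : u⁻¹ - v⁻¹ = u⁻¹ * v⁻¹ * (v - u) := by
    calc u⁻¹ - v⁻¹ = u⁻¹ * (v * v⁻¹) - (u * u⁻¹) * v⁻¹ := by rw [hu', hv']; ring
      _ = u⁻¹ * v⁻¹ * (v - u) := by ring
  rw [key, show v - u = -(u - v) by ring]
  exact Dvd.dvd.mul_left (dvd_neg.mpr h) _

lemma convJ_dvd (N : ℕ) : ∀ k, k ≤ N →
    (PowerSeries.X : PowerSeries E) ^ (k+1) ∣ convJ bE aE N k - Rr (N - k) := by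
  intro k
  induction k with
  | zero =>
      intro _
      rw [Nat.sub_zero, Rr_eq N, convJ]
      refine X_dvd_inv_sub (by simp) (by simp) ?_
      refine ⟨PowerSeries.C (aE (N+1)) * Rr (N+1), ?_⟩
      ring
  | succ k ih =>
      intro hk
      obtain ⟨t, ht⟩ := ih (by omega)
      rw [show N - (k+1) = N - k - 1 by omega, Rr_eq (N-k-1),
        show N - k - 1 + 1 = N - k by omega, convJ]
      refine X_dvd_inv_sub (by simp) (by simp) ?_
      refine ⟨-(PowerSeries.C (aE (N - k)) * t), ?_⟩
      linear_combination (-(PowerSeries.C (aE (N - k)) * PowerSeries.X)) * ht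

lemma convS_dvd (N : ℕ) : ∀ k, k ≤ N →
    (PowerSeries.X : PowerSeries E) ^ (k+1) ∣ convS lamE N k - Tr (N - k) := by
  intro k
  induction k with
  | zero =>
      intro _
      rw [Nat.sub_zero, Tr_eq N, convS]
      have hone : (1 : PowerSeries E)⁻¹ = 1 := by
        have := PowerSeries.mul_inv_cancel (1 : PowerSeries E) (by simp)
        rwa [one_mul] at this
      have hdvd : (PowerSeries.X : PowerSeries E) ^ (0+1) ∣
          (1 : PowerSeries E) -
            (1 - PowerSeries.C (lamE (N+1)) * PowerSeries.X * Tr (N+1)) :=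
        ⟨PowerSeries.C (lamE (N+1)) * Tr (N+1), by ring⟩
      have hres := X_dvd_inv_sub (u := 1) (by simp) (by simp) hdvd
      rwa [hone] at hres
  | succ k ih =>
      intro hk
      obtain ⟨t, ht⟩ := ih (by omega)
      rw [show N - (k+1) = N - k - 1 by omega, Tr_eq (N-k-1),
        show N - k - 1 + 1 = N - k by omega, convS]
      refine X_dvd_inv_sub (by simp) (by simp) ?_
      refine ⟨-(PowerSeries.C (lamE (N - k)) * t), ?_⟩
      linear_combination (-(PowerSeries.C (lamE (N - k)) * PowerSeries.X)) * ht

lemma ratio_eq_Rr0 :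
    phiSeries (cv * qv) qv * (phiSeries cv 1)⁻¹ = Rr 0 := by
  rw [Rr, Gs, Gs, pow_zero, pow_one, mul_one]

lemma ratio_eq_Tr0 :
    phiSeries (cv * qv) qv * (phiSeries cv 1)⁻¹ = Tr 0 := by
  rw [Tr, Hs, Hs, pow_one]
  norm_num

/-- Proposition 6.4: the ratio `₁φ₁(0;cq;q,qz)/₁φ₁(0;c;q,z)` admits the two continued
fraction expansions, with data `(b_i, a_i)` and with data `λ_i`, each identity meaning
that the depth-`N` convergent agrees with the ratio modulo `z^N` for every `N ≥ 1`. -/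
theorem two_continued_fractions_1phi1 :
    (∀ N : ℕ, 1 ≤ N → ∀ i < N,
      PowerSeries.coeff i (phiSeries (cv * qv) qv * (phiSeries cv 1)⁻¹)
        = PowerSeries.coeff i (convJ bE aE N N)) ∧
    (∀ N : ℕ, 1 ≤ N → ∀ i < N,
      PowerSeries.coeff i (phiSeries (cv * qv) qv * (phiSeries cv 1)⁻¹)
        = PowerSeries.coeff i (convS lamE N N)) := by
  constructor
  · intro N hN i hi
    have hd := convJ_dvd N N le_rfl
    rw [Nat.sub_self, PowerSeries.X_pow_dvd_iff] at hd
    have h := hd i (by omega)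
    rw [map_sub, sub_eq_zero] at h
    rw [ratio_eq_Rr0]
    exact h.symm
  · intro N hN i hi
    have hd := convS_dvd N N le_rfl
    rw [Nat.sub_self, PowerSeries.X_pow_dvd_iff] at hd
    have h := hd i (by omega)
    rw [map_sub, sub_eq_zero] at h
    rw [ratio_eq_Tr0]
    exact h.symm


end
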